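/- Let K be the field of fractions of ℚ[x₀,x₁,x₂,x₃,x₄,x₅] and let τ'₁, τ'₂, τ'₃ be the maps on K⁶ defined by: τ'₁ replaces (v₀,v₁) by ((v₂v₄+v₃v₅)/v₁, (v₂v₄+v₃v₅)/v₀); τ'₂ replaces (v₂,v₃) by ((v₁v₄+v₀v₅)/v₃, (v₁v₄+v₀v₅)/v₂); τ'₃ replaces (v₄,v₅) by ((v₀v₂+v₁v₃)/v₅, (v₀v₂+v₁v₃)/v₄); each fixes the remaining entries. Let X = (x₀,…,x₅). Then for all natural numbers s, t with (s,t) ≠ (0,0), the tuple obtained by applying, in left-to-right order, the word consisting of the block (1,2,3) repeated 2t times followed by the block (2,1,3) repeated 2s times to X is not equal to X. -/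

import Mathlib

noncomputable section

/-- The polynomial ring ℚ[x₀,…,x₅]. -/
abbrev P : Type := MvPolynomial (Fin 6) ℚ

/-- K = Frac(ℚ[x₀,…,x₅]). -/
abbrev K : Type := FractionRing P

/-- The images of the variables x₀,…,x₅ in K. -/
def x (i : Fin 6) : K := algebraMap P K (MvPolynomial.X i)

/-- τ'₁ : replaces (v₀, v₁) by ((v₂v₄+v₃v₅)/v₁, (v₂v₄+v₃v₅)/v₀). -/
def tau1 (v : Fin 6 → K) : Fin 6 → K := fun k =>
  if k = 0 then (v 2 * v 4 + v 3 * v 5) / v 1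
  else if k = 1 then (v 2 * v 4 + v 3 * v 5) / v 0
  else v k

/-- τ'₂ : replaces (v₂, v₃) by ((v₁v₄+v₀v₅)/v₃, (v₁v₄+v₀v₅)/v₂). -/
def tau2 (v : Fin 6 → K) : Fin 6 → K := fun k =>
  if k = 2 then (v 1 * v 4 + v 0 * v 5) / v 3
  else if k = 3 then (v 1 * v 4 + v 0 * v 5) / v 2
  else v k

/-- τ'₃ : replaces (v₄, v₅) by ((v₀v₂+v₁v₃)/v₅, (v₀v₂+v₁v₃)/v₄). -/
def tau3 (v : Fin 6 → K) : Fin 6 → K := fun k =>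
  if k = 4 then (v 0 * v 2 + v 1 * v 3) / v 5
  else if k = 5 then (v 0 * v 2 + v 1 * v 3) / v 4
  else v k

/-- τ' indexed by Fin 3: `tau i` is τ'_{i+1}. -/
def tau : Fin 3 → (Fin 6 → K) → (Fin 6 → K)
  | 0 => tau1
  | 1 => tau2
  | 2 => tau3

/-- The initial labeled seed X = (x₀,…,x₅). -/
def X0 : Fin 6 → K := x

/-- Apply the maps τ'₍a₁₎, …, τ'₍aₙ₎ along the word `w` in left-to-right order. -/
def applyWord (w : List (Fin 3)) (v : Fin 6 → K) : Fin 6 → K :=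
  w.foldl (fun u a => tau a u) v

/-- A = (x₂x₄+x₃x₅)/(x₀x₁). -/
def A : K := (x 2 * x 4 + x 3 * x 5) / (x 0 * x 1)

/-- B = (x₁x₄+x₀x₅)/(x₂x₃). -/
def B : K := (x 1 * x 4 + x 0 * x 5) / (x 2 * x 3)

/-- C = (x₀x₂+x₁x₃)/(x₄x₅). -/
def C : K := (x 0 * x 2 + x 1 * x 3) / (x 4 * x 5)

/-- The canonical path (123)^{2t}(213)^{2s} to the even alcove (3s, 3t)
(letters 1,2,3 are encoded as 0,1,2 in `Fin 3`). -/
def word17 (s t : ℕ) : List (Fin 3) :=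
  (List.replicate (2 * t) ([0, 1, 2] : List (Fin 3))).flatten ++
    (List.replicate (2 * s) ([1, 0, 2] : List (Fin 3))).flatten

/-! ### Auxiliary machinery -/

namespace SeedAux

open MvPolynomial

/-- Evaluation point (1,2,1,3,1,5). -/
def q : Fin 6 → ℚ := fun i =>
  if i = 0 then 1 else if i = 1 then 2 else if i = 2 then 1
  else if i = 3 then 3 else if i = 4 then 1 else 5

def pa : P := X 2 * X 4 + X 3 * X 5
def pu : P := X 0 * X 1
def pb : P := X 1 * X 4 + X 0 * X 5
def pv : P := X 2 * X 3
def pc : P := X 0 * X 2 + X 1 * X 3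
def pw : P := X 4 * X 5

lemma eval_pa : eval q pa = 16 := by simp [pa, q]; norm_num
lemma eval_pu : eval q pu = 2 := by simp [pu, q]
lemma eval_pb : eval q pb = 7 := by simp [pb, q]; norm_num
lemma eval_pv : eval q pv = 3 := by simp [pv, q]
lemma eval_pc : eval q pc = 7 := by simp [pc, q]; norm_num
lemma eval_pw : eval q pw = 5 := by simp [pw, q]

lemma pa_ne : pa ≠ 0 := fun h => by simpa [h] using eval_pa
lemma pu_ne : pu ≠ 0 := fun h => by simpa [h] using eval_pu
lemma pb_ne : pb ≠ 0 := fun h => by simpa [h] using eval_pb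
lemma pv_ne : pv ≠ 0 := fun h => by simpa [h] using eval_pv
lemma pc_ne : pc ≠ 0 := fun h => by simpa [h] using eval_pc
lemma pw_ne : pw ≠ 0 := fun h => by simpa [h] using eval_pw

lemma phi_ne {p : P} (hp : p ≠ 0) : algebraMap P K p ≠ 0 := by
  rwa [ne_eq, IsFractionRing.to_map_eq_zero_iff]

lemma x_ne (i : Fin 6) : x i ≠ 0 := phi_ne (MvPolynomial.X_ne_zero i)

lemma A_eq : A = algebraMap P K pa / algebraMap P K pu := by
  simp [A, x, pa, pu]
lemma B_eq : B = algebraMap P K pb / algebraMap P K pv := by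
  simp [B, x, pb, pv]
lemma C_eq : C = algebraMap P K pc / algebraMap P K pw := by
  simp [_root_.C, x, pc, pw]

lemma A_ne : A ≠ 0 := by rw [A_eq]; exact div_ne_zero (phi_ne pa_ne) (phi_ne pu_ne)
lemma B_ne : B ≠ 0 := by rw [B_eq]; exact div_ne_zero (phi_ne pb_ne) (phi_ne pv_ne)
lemma C_ne : C ≠ 0 := by rw [C_eq]; exact div_ne_zero (phi_ne pc_ne) (phi_ne pw_ne)

lemma fact_mul {n m : ℕ} (hn : n ≠ 0) (hm : m ≠ 0) (pr : ℕ) :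
    (n * m).factorization pr = n.factorization pr + m.factorization pr := by
  rw [Nat.factorization_mul hn hm, Finsupp.add_apply]

lemma fact_pow (n k pr : ℕ) : (n ^ k).factorization pr = k * n.factorization pr := by
  rw [Nat.factorization_pow, Finsupp.smul_apply, smul_eq_mul]

lemma nat_indep (p1 p2 p3 m1 m2 m3 : ℕ)
    (h : 16 ^ p1 * 7 ^ p2 * 7 ^ p3 * 2 ^ m1 * 3 ^ m2 * 5 ^ m3
       = 16 ^ m1 * 7 ^ m2 * 7 ^ m3 * 2 ^ p1 * 3 ^ p2 * 5 ^ p3) :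
    p1 = m1 ∧ p2 = m2 ∧ p3 = m3 := by
  have key : ∀ pr : ℕ,
      (16 ^ p1 * 7 ^ p2 * 7 ^ p3 * 2 ^ m1 * 3 ^ m2 * 5 ^ m3 : ℕ).factorization pr
      = (16 ^ m1 * 7 ^ m2 * 7 ^ m3 * 2 ^ p1 * 3 ^ p2 * 5 ^ p3 : ℕ).factorization pr := by
    intro pr; rw [h]
  have expand : ∀ (a1 a2 a3 a4 a5 a6 pr : ℕ),
      (16 ^ a1 * 7 ^ a2 * 7 ^ a3 * 2 ^ a4 * 3 ^ a5 * 5 ^ a6 : ℕ).factorization pr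
      = a1 * (16:ℕ).factorization pr + a2 * (7:ℕ).factorization pr
        + a3 * (7:ℕ).factorization pr + a4 * (2:ℕ).factorization pr
        + a5 * (3:ℕ).factorization pr + a6 * (5:ℕ).factorization pr := by
    intro a1 a2 a3 a4 a5 a6 pr
    rw [fact_mul (by positivity) (by positivity), fact_mul (by positivity) (by positivity),
        fact_mul (by positivity) (by positivity), fact_mul (by positivity) (by positivity),
        fact_mul (by positivity) (by positivity), fact_pow, fact_pow, fact_pow, fact_pow,
        fact_pow, fact_pow]
  have f16_2 : (16:ℕ).factorization 2 = 4 := by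
    have : (16:ℕ) = 2 ^ 4 := by norm_num
    rw [this, Nat.Prime.factorization_pow Nat.prime_two, Finsupp.single_apply]; simp
  have f7_2 : (7:ℕ).factorization 2 = 0 := Nat.factorization_eq_zero_of_not_dvd (by decide)
  have f2_2 : (2:ℕ).factorization 2 = 1 := Nat.Prime.factorization_self Nat.prime_two
  have f3_2 : (3:ℕ).factorization 2 = 0 := Nat.factorization_eq_zero_of_not_dvd (by decide)
  have f5_2 : (5:ℕ).factorization 2 = 0 := Nat.factorization_eq_zero_of_not_dvd (by decide)
  have f16_3 : (16:ℕ).factorization 3 = 0 := Nat.factorization_eq_zero_of_not_dvd (by decide)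
  have f7_3 : (7:ℕ).factorization 3 = 0 := Nat.factorization_eq_zero_of_not_dvd (by decide)
  have f2_3 : (2:ℕ).factorization 3 = 0 := Nat.factorization_eq_zero_of_not_dvd (by decide)
  have f3_3 : (3:ℕ).factorization 3 = 1 := Nat.Prime.factorization_self Nat.prime_three
  have f5_3 : (5:ℕ).factorization 3 = 0 := Nat.factorization_eq_zero_of_not_dvd (by decide)
  have f16_5 : (16:ℕ).factorization 5 = 0 := Nat.factorization_eq_zero_of_not_dvd (by decide)
  have f7_5 : (7:ℕ).factorization 5 = 0 := Nat.factorization_eq_zero_of_not_dvd (by decide)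
  have f2_5 : (2:ℕ).factorization 5 = 0 := Nat.factorization_eq_zero_of_not_dvd (by decide)
  have f3_5 : (3:ℕ).factorization 5 = 0 := Nat.factorization_eq_zero_of_not_dvd (by decide)
  have f5_5 : (5:ℕ).factorization 5 = 1 :=
    Nat.Prime.factorization_self (by norm_num)
  have h2 := key 2; have h3 := key 3; have h5 := key 5
  rw [expand, expand, f16_2, f7_2, f2_2, f3_2, f5_2] at h2
  rw [expand, expand, f16_3, f7_3, f2_3, f3_3, f5_3] at h3
  rw [expand, expand, f16_5, f7_5, f2_5, f3_5, f5_5] at h5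
  refine ⟨by omega, by omega, by omega⟩

/-- A,B,C are multiplicatively independent in Kˣ. -/
lemma ABC_indep (n1 n2 n3 : ℤ) (h : A ^ n1 * B ^ n2 * C ^ n3 = 1) :
    n1 = 0 ∧ n2 = 0 ∧ n3 = 0 := by
  set p1 := n1.toNat with hp1
  set m1 := (-n1).toNat with hm1
  set p2 := n2.toNat with hp2
  set m2 := (-n2).toNat with hm2
  set p3 := n3.toNat with hp3
  set m3 := (-n3).toNat with hm3
  have e1 : n1 = (p1 : ℤ) - (m1 : ℤ) := by omega
  have e2 : n2 = (p2 : ℤ) - (m2 : ℤ) := by omega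
  have e3 : n3 = (p3 : ℤ) - (m3 : ℤ) := by omega
  rw [e1, e2, e3, zpow_sub₀ A_ne, zpow_sub₀ B_ne, zpow_sub₀ C_ne] at h
  simp only [zpow_natCast] at h
  have hA := A_ne; have hB := B_ne; have hC := C_ne
  have key : A ^ p1 * B ^ p2 * C ^ p3 = A ^ m1 * B ^ m2 * C ^ m3 := by
    field_simp at h
    linear_combination h
  rw [A_eq, B_eq, C_eq] at key
  have hpu := phi_ne pu_ne; have hpv := phi_ne pv_ne; have hpw := phi_ne pw_ne
  rw [div_pow, div_pow, div_pow, div_pow, div_pow, div_pow] at key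
  rw [div_mul_div_comm, div_mul_div_comm, div_mul_div_comm, div_mul_div_comm] at key
  rw [div_eq_div_iff
    (mul_ne_zero (mul_ne_zero (pow_ne_zero _ hpu) (pow_ne_zero _ hpv)) (pow_ne_zero _ hpw))
    (mul_ne_zero (mul_ne_zero (pow_ne_zero _ hpu) (pow_ne_zero _ hpv)) (pow_ne_zero _ hpw))] at key
  have key2 : (pa ^ p1 * pb ^ p2 * pc ^ p3 * (pu ^ m1 * pv ^ m2 * pw ^ m3) : P)
      = pa ^ m1 * pb ^ m2 * pc ^ m3 * (pu ^ p1 * pv ^ p2 * pw ^ p3) := by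
    apply IsFractionRing.injective P K
    simp only [map_mul, map_pow]
    linear_combination key
  have keyQ := congrArg (eval q) key2
  simp only [map_mul, map_pow, eval_pa, eval_pb, eval_pc, eval_pu, eval_pv, eval_pw] at keyQ
  have keyN : (16:ℕ) ^ p1 * 7 ^ p2 * 7 ^ p3 * 2 ^ m1 * 3 ^ m2 * 5 ^ m3
      = 16 ^ m1 * 7 ^ m2 * 7 ^ m3 * 2 ^ p1 * 3 ^ p2 * 5 ^ p3 := by
    have : ((16:ℕ) ^ p1 * 7 ^ p2 * 7 ^ p3 * 2 ^ m1 * 3 ^ m2 * 5 ^ m3 : ℚ)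
        = ((16:ℕ) ^ m1 * 7 ^ m2 * 7 ^ m3 * 2 ^ p1 * 3 ^ p2 * 5 ^ p3 : ℚ) := by
      push_cast
      linear_combination keyQ
    exact_mod_cast this
  obtain ⟨q1, q2, q3⟩ := nat_indep _ _ _ _ _ _ keyN
  omega

/-! ### The invariant -/

def Aof (v : Fin 6 → K) : K := (v 2 * v 4 + v 3 * v 5) / (v 0 * v 1)
def Bof (v : Fin 6 → K) : K := (v 1 * v 4 + v 0 * v 5) / (v 2 * v 3)
def Cof (v : Fin 6 → K) : K := (v 0 * v 2 + v 1 * v 3) / (v 4 * v 5)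

def Inv (v : Fin 6 → K) (a1 b1 c1 a2 b2 c2 a3 b3 c3 : ℤ) : Prop :=
  (∀ k, v k ≠ 0) ∧ Aof v = A ^ a1 * B ^ b1 * C ^ c1
    ∧ Bof v = A ^ a2 * B ^ b2 * C ^ c2 ∧ Cof v = A ^ a3 * B ^ b3 * C ^ c3

lemma mono_ne (a b c : ℤ) : A ^ a * B ^ b * C ^ c ≠ 0 :=
  mul_ne_zero (mul_ne_zero (zpow_ne_zero _ A_ne) (zpow_ne_zero _ B_ne)) (zpow_ne_zero _ C_ne)

lemma recomb (a b c a' b' c' : ℤ) :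
    (A ^ a * B ^ b * C ^ c) * (A ^ a' * B ^ b' * C ^ c')
      = A ^ (a + a') * B ^ (b + b') * C ^ (c + c') := by
  rw [zpow_add₀ A_ne, zpow_add₀ B_ne, zpow_add₀ C_ne]; ring

lemma mono_inv (a b c : ℤ) :
    (A ^ a * B ^ b * C ^ c)⁻¹ = A ^ (-a) * B ^ (-b) * C ^ (-c) := by
  rw [zpow_neg, zpow_neg, zpow_neg, mul_inv, mul_inv]

lemma Inv_congr {v : Fin 6 → K} {a1 b1 c1 a2 b2 c2 a3 b3 c3 a1' b1' c1' a2' b2' c2' a3' b3' c3' : ℤ}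
    (h : Inv v a1 b1 c1 a2 b2 c2 a3 b3 c3)
    (e1 : a1 = a1') (e2 : b1 = b1') (e3 : c1 = c1')
    (e4 : a2 = a2') (e5 : b2 = b2') (e6 : c2 = c2')
    (e7 : a3 = a3') (e8 : b3 = b3') (e9 : c3 = c3') :
    Inv v a1' b1' c1' a2' b2' c2' a3' b3' c3' := by
  subst e1 e2 e3 e4 e5 e6 e7 e8 e9; exact h

lemma step1 {v : Fin 6 → K} {a1 b1 c1 a2 b2 c2 a3 b3 c3 : ℤ}
    (h : Inv v a1 b1 c1 a2 b2 c2 a3 b3 c3) :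
    Inv (tau1 v) (-a1) (-b1) (-c1) (a1+a2) (b1+b2) (c1+c2) (a1+a3) (b1+b3) (c1+c3) := by
  obtain ⟨hv, hA1, hB1, hC1⟩ := h
  have h0 := hv 0; have h1 := hv 1; have h2 := hv 2
  have h3 := hv 3; have h4 := hv 4; have h5 := hv 5
  have hAv : Aof v ≠ 0 := by rw [hA1]; exact mono_ne _ _ _
  have hN : v 2 * v 4 + v 3 * v 5 ≠ 0 := by
    intro hz
    exact hAv (by simp only [Aof]; rw [hz, zero_div])
  have c0 : tau1 v 0 = (v 2 * v 4 + v 3 * v 5) / v 1 := rfl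
  have c1' : tau1 v 1 = (v 2 * v 4 + v 3 * v 5) / v 0 := rfl
  have c2' : tau1 v 2 = v 2 := rfl
  have c3' : tau1 v 3 = v 3 := rfl
  have c4' : tau1 v 4 = v 4 := rfl
  have c5' : tau1 v 5 = v 5 := rfl
  refine ⟨?_, ?_, ?_, ?_⟩
  · intro k
    fin_cases k
    · exact div_ne_zero hN h1
    · exact div_ne_zero hN h0
    · exact h2
    · exact h3
    · exact h4
    · exact h5
  · have eA : Aof (tau1 v) = (Aof v)⁻¹ := by
      simp only [Aof]
      rw [c0, c1', c2', c3', c4', c5']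
      field_simp
    rw [eA, hA1, mono_inv]
  · have eB : Bof (tau1 v) = Aof v * Bof v := by
      simp only [Aof, Bof]
      rw [c0, c1', c2', c3', c4', c5']
      field_simp
    rw [eB, hA1, hB1, recomb]
  · have eC : Cof (tau1 v) = Aof v * Cof v := by
      simp only [Aof, Cof]
      rw [c0, c1', c2', c3', c4', c5']
      field_simp
    rw [eC, hA1, hC1, recomb]

lemma step2 {v : Fin 6 → K} {a1 b1 c1 a2 b2 c2 a3 b3 c3 : ℤ}
    (h : Inv v a1 b1 c1 a2 b2 c2 a3 b3 c3) :
    Inv (tau2 v) (a2+a1) (b2+b1) (c2+c1) (-a2) (-b2) (-c2) (a2+a3) (b2+b3) (c2+c3) := by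
  obtain ⟨hv, hA1, hB1, hC1⟩ := h
  have h0 := hv 0; have h1 := hv 1; have h2 := hv 2
  have h3 := hv 3; have h4 := hv 4; have h5 := hv 5
  have hBv : Bof v ≠ 0 := by rw [hB1]; exact mono_ne _ _ _
  have hN : v 1 * v 4 + v 0 * v 5 ≠ 0 := by
    intro hz
    exact hBv (by simp only [Bof]; rw [hz, zero_div])
  have c0 : tau2 v 0 = v 0 := rfl
  have c1' : tau2 v 1 = v 1 := rfl
  have c2' : tau2 v 2 = (v 1 * v 4 + v 0 * v 5) / v 3 := rfl
  have c3' : tau2 v 3 = (v 1 * v 4 + v 0 * v 5) / v 2 := rfl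
  have c4' : tau2 v 4 = v 4 := rfl
  have c5' : tau2 v 5 = v 5 := rfl
  refine ⟨?_, ?_, ?_, ?_⟩
  · intro k
    fin_cases k
    · exact h0
    · exact h1
    · exact div_ne_zero hN h3
    · exact div_ne_zero hN h2
    · exact h4
    · exact h5
  · have eA : Aof (tau2 v) = Bof v * Aof v := by
      simp only [Aof, Bof]
      rw [c0, c1', c2', c3', c4', c5']
      field_simp
    rw [eA, hB1, hA1, recomb]
  · have eB : Bof (tau2 v) = (Bof v)⁻¹ := by
      simp only [Bof]
      rw [c0, c1', c2', c3', c4', c5']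
      field_simp
    rw [eB, hB1, mono_inv]
  · have eC : Cof (tau2 v) = Bof v * Cof v := by
      simp only [Bof, Cof]
      rw [c0, c1', c2', c3', c4', c5']
      field_simp
    rw [eC, hB1, hC1, recomb]

lemma step3 {v : Fin 6 → K} {a1 b1 c1 a2 b2 c2 a3 b3 c3 : ℤ}
    (h : Inv v a1 b1 c1 a2 b2 c2 a3 b3 c3) :
    Inv (tau3 v) (a3+a1) (b3+b1) (c3+c1) (a3+a2) (b3+b2) (c3+c2) (-a3) (-b3) (-c3) := by
  obtain ⟨hv, hA1, hB1, hC1⟩ := h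
  have h0 := hv 0; have h1 := hv 1; have h2 := hv 2
  have h3 := hv 3; have h4 := hv 4; have h5 := hv 5
  have hCv : Cof v ≠ 0 := by rw [hC1]; exact mono_ne _ _ _
  have hN : v 0 * v 2 + v 1 * v 3 ≠ 0 := by
    intro hz
    exact hCv (by simp only [Cof]; rw [hz, zero_div])
  have c0 : tau3 v 0 = v 0 := rfl
  have c1' : tau3 v 1 = v 1 := rfl
  have c2' : tau3 v 2 = v 2 := rfl
  have c3' : tau3 v 3 = v 3 := rfl
  have c4' : tau3 v 4 = (v 0 * v 2 + v 1 * v 3) / v 5 := rfl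
  have c5' : tau3 v 5 = (v 0 * v 2 + v 1 * v 3) / v 4 := rfl
  refine ⟨?_, ?_, ?_, ?_⟩
  · intro k
    fin_cases k
    · exact h0
    · exact h1
    · exact h2
    · exact h3
    · exact div_ne_zero hN h5
    · exact div_ne_zero hN h4
  · have eA : Aof (tau3 v) = Cof v * Aof v := by
      simp only [Aof, Cof]
      rw [c0, c1', c2', c3', c4', c5']
      field_simp
    rw [eA, hC1, hA1, recomb]
  · have eB : Bof (tau3 v) = Cof v * Bof v := by
      simp only [Bof, Cof]
      rw [c0, c1', c2', c3', c4', c5']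
      field_simp
    rw [eB, hC1, hB1, recomb]
  · have eC : Cof (tau3 v) = (Cof v)⁻¹ := by
      simp only [Cof]
      rw [c0, c1', c2', c3', c4', c5']
      field_simp
    rw [eC, hC1, mono_inv]

lemma applyWord_append (w1 w2 : List (Fin 3)) (v : Fin 6 → K) :
    applyWord (w1 ++ w2) v = applyWord w2 (applyWord w1 v) := by
  unfold applyWord
  exact List.foldl_append

lemma applyWord_T (v : Fin 6 → K) :
    applyWord [0, 1, 2] v = tau3 (tau2 (tau1 v)) := rfl

lemma applyWord_S (v : Fin 6 → K) :
    applyWord [1, 0, 2] v = tau3 (tau1 (tau2 v)) := rfl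

lemma stepT {v : Fin 6 → K} {a1 b1 c1 a2 b2 c2 a3 b3 c3 : ℤ}
    (h : Inv v a1 b1 c1 a2 b2 c2 a3 b3 c3) :
    Inv (applyWord [0, 1, 2] v)
      (2*a1+2*a2+a3) (2*b1+2*b2+b3) (2*c1+2*c2+c3)
      (a1+a3) (b1+b3) (c1+c3)
      (-(2*a1)-a2-a3) (-(2*b1)-b2-b3) (-(2*c1)-c2-c3) := by
  rw [applyWord_T]
  exact Inv_congr (step3 (step2 (step1 h)))
    (by ring) (by ring) (by ring) (by ring) (by ring) (by ring) (by ring) (by ring) (by ring)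

lemma stepS {v : Fin 6 → K} {a1 b1 c1 a2 b2 c2 a3 b3 c3 : ℤ}
    (h : Inv v a1 b1 c1 a2 b2 c2 a3 b3 c3) :
    Inv (applyWord [1, 0, 2] v)
      (a2+a3) (b2+b3) (c2+c3)
      (2*a1+2*a2+a3) (2*b1+2*b2+b3) (2*c1+2*c2+c3)
      (-a1-2*a2-a3) (-b1-2*b2-b3) (-c1-2*c2-c3) := by
  rw [applyWord_S]
  exact Inv_congr (step3 (step1 (step2 h)))
    (by ring) (by ring) (by ring) (by ring) (by ring) (by ring) (by ring) (by ring) (by ring)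

lemma Inv_X0 : Inv X0 1 0 0 0 1 0 0 0 1 := by
  refine ⟨fun k => x_ne k, ?_, ?_, ?_⟩ <;>
    simp [Aof, Bof, Cof, X0, A, B, _root_.C]

lemma indT (t : ℕ) :
    Inv (applyWord ((List.replicate (2 * t) ([0, 1, 2] : List (Fin 3))).flatten) X0)
      (3*(t:ℤ)+1) (3*(t:ℤ)) (3*(t:ℤ)) 0 1 0 (-(3*(t:ℤ))) (-(3*(t:ℤ))) (1-3*(t:ℤ)) := by
  induction t with
  | zero =>
      simp only [Nat.mul_zero, List.replicate_zero, List.flatten_nil]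
      exact Inv_congr Inv_X0 (by norm_num) (by norm_num) (by norm_num) (by norm_num)
        (by norm_num) (by norm_num) (by norm_num) (by norm_num) (by norm_num)
  | succ t ih =>
      have hrep : 2 * (t + 1) = 2 * t + 2 := by ring
      rw [hrep, List.replicate_add, List.flatten_append, applyWord_append]
      have h2 : (List.replicate 2 ([0, 1, 2] : List (Fin 3))).flatten
          = [0, 1, 2] ++ [0, 1, 2] := rfl
      rw [h2, applyWord_append]
      refine Inv_congr (stepT (stepT ih)) ?_ ?_ ?_ ?_ ?_ ?_ ?_ ?_ ?_ <;> push_cast <;> ring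

lemma indS (s : ℕ) {v : Fin 6 → K} {a1 b1 c1 a2 b2 c2 a3 b3 c3 : ℤ}
    (h : Inv v a1 b1 c1 a2 b2 c2 a3 b3 c3) :
    Inv (applyWord ((List.replicate (2 * s) ([1, 0, 2] : List (Fin 3))).flatten) v)
      a1 b1 c1
      (3*(s:ℤ)*a1 + (3*(s:ℤ)+1)*a2 + 3*(s:ℤ)*a3)
      (3*(s:ℤ)*b1 + (3*(s:ℤ)+1)*b2 + 3*(s:ℤ)*b3)
      (3*(s:ℤ)*c1 + (3*(s:ℤ)+1)*c2 + 3*(s:ℤ)*c3)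
      (-(3*(s:ℤ))*a1 - 3*(s:ℤ)*a2 + (1-3*(s:ℤ))*a3)
      (-(3*(s:ℤ))*b1 - 3*(s:ℤ)*b2 + (1-3*(s:ℤ))*b3)
      (-(3*(s:ℤ))*c1 - 3*(s:ℤ)*c2 + (1-3*(s:ℤ))*c3) := by
  induction s with
  | zero =>
      simp only [Nat.mul_zero, List.replicate_zero, List.flatten_nil]
      exact Inv_congr h (by norm_num) (by norm_num) (by norm_num) (by push_cast; ring)
        (by push_cast; ring) (by push_cast; ring) (by push_cast; ring) (by push_cast; ring)
        (by push_cast; ring)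
  | succ s ih =>
      have hrep : 2 * (s + 1) = 2 * s + 2 := by ring
      rw [hrep, List.replicate_add, List.flatten_append, applyWord_append]
      have h2 : (List.replicate 2 ([1, 0, 2] : List (Fin 3))).flatten
          = [1, 0, 2] ++ [1, 0, 2] := rfl
      rw [h2, applyWord_append]
      refine Inv_congr (stepS (stepS ih)) ?_ ?_ ?_ ?_ ?_ ?_ ?_ ?_ ?_ <;> push_cast <;> ring

end SeedAux

/-- Remark 2.3: distinct even alcoves of the northeast cone carry distinct
labeled seeds; in particular the seed at any even alcove (3s, 3t) ≠ (0, 0)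
differs from the initial seed. -/
theorem seed_nontrivial (s t : ℕ) (h : (s, t) ≠ (0, 0)) :
    applyWord (word17 s t) X0 ≠ X0 := by
  open SeedAux in
  intro hEq
  have hInv0 := indS s (indT t)
  rw [← applyWord_append, ← word17] at hInv0
  have hInv := Inv_congr hInv0 rfl rfl rfl
      (show _ = 3*(s:ℤ) by push_cast; ring)
      (show _ = 3*(s:ℤ)+1 by push_cast; ring)
      (show _ = 3*(s:ℤ) by push_cast; ring)
      rfl rfl rfl
  rw [hEq] at hInv
  obtain ⟨-, hA1, hB1, -⟩ := hInv
  have hAX : SeedAux.Aof X0 = A := rfl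
  have hBX : SeedAux.Bof X0 = B := rfl
  rw [hAX] at hA1
  rw [hBX] at hB1
  have ht : A ^ (3*(t:ℤ)) * B ^ (3*(t:ℤ)) * C ^ (3*(t:ℤ)) = 1 := by
    have := hA1
    rw [zpow_add_one₀ A_ne] at this
    apply mul_left_cancel₀ A_ne
    rw [mul_one]
    linear_combination -this
  have hs : A ^ (3*(s:ℤ)) * B ^ (3*(s:ℤ)) * C ^ (3*(s:ℤ)) = 1 := by
    have := hB1
    rw [zpow_add_one₀ B_ne] at this
    apply mul_left_cancel₀ B_ne
    rw [mul_one]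
    linear_combination -this
  obtain ⟨ht0, -, -⟩ := ABC_indep _ _ _ ht
  obtain ⟨hs0, -, -⟩ := ABC_indep _ _ _ hs
  apply h
  have : t = 0 := by omega
  have : s = 0 := by omega
  simp_all
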